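/- Let C₁ > 0 and let γ : ℝ → ℝ² satisfy C₁·|s − t| ≤ ‖γ(s) − γ(t)‖ ≤ |s − t| for all s, t ∈ ℝ, and let R, κ > 0. Define k₄ : ℝ² \ {0} → ℝ by k₄(y) = ‖y‖^{−1/2} for 0 < ‖y‖ ≤ R and k₄(y) = e^{−κ‖y‖} for ‖y‖ > R. Then sup_{x ∈ ℝ²} ∫_ℝ k₄(x − γ(s)) ds < ∞. -/

import Mathlib

open MeasureTheory Set Filter

private lemma stmt10_aux_int (c r₀ b : ℝ) (hc : 0 < c) (hb : 0 < b) (hr₀ : 0 ≤ r₀) :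
    Integrable (fun u : ℝ => (if |u| ≤ r₀ then (c * |u|) ^ (-(1/2 : ℝ)) else 0)
      + Real.exp (-b * |u|)) := by
  have hIci : IntegrableOn (fun u : ℝ => (if |u| ≤ r₀ then (c * |u|) ^ (-(1/2 : ℝ)) else 0)
      + Real.exp (-b * |u|)) (Ici 0) := by
    have hA : IntegrableOn (fun u : ℝ => (if |u| ≤ r₀ then (c * |u|) ^ (-(1/2 : ℝ)) else 0)) (Ici 0) := by
      have h1 : IntegrableOn (fun u : ℝ => u ^ (-(1/2:ℝ))) (Icc 0 r₀) := by
        rw [← intervalIntegrable_iff_integrableOn_Icc_of_le hr₀]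
        exact intervalIntegral.intervalIntegrable_rpow' (by norm_num)
      have h2 : IntegrableOn (fun u : ℝ => c ^ (-(1/2:ℝ)) * u ^ (-(1/2:ℝ))) (Icc 0 r₀) :=
        h1.const_mul _
      have h3 : IntegrableOn (fun u : ℝ => (c * |u|) ^ (-(1/2:ℝ))) (Icc 0 r₀) := by
        apply h2.congr_fun ?_ measurableSet_Icc
        intro u hu
        simp only [abs_of_nonneg hu.1, Real.mul_rpow hc.le hu.1]
      have h4 : Integrable ((Icc (0:ℝ) r₀).indicator (fun u : ℝ => (c * |u|) ^ (-(1/2:ℝ)))) := by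
        rwa [integrable_indicator_iff measurableSet_Icc]
      apply (h4.integrableOn (s := Ici 0)).congr_fun ?_ measurableSet_Ici
      intro u hu
      simp only [indicator, mem_Icc]
      rw [abs_of_nonneg hu]
      by_cases h : u ≤ r₀ <;> simp [h, hu, mem_Ici.mp hu]
    have hB : IntegrableOn (fun u : ℝ => Real.exp (-b * |u|)) (Ici 0) := by
      apply ((exp_neg_integrableOn_Ioi 0 hb).congr_set_ae Ioi_ae_eq_Ici.symm).congr_fun ?_
        measurableSet_Ici
      intro u hu
      simp only [abs_of_nonneg (mem_Ici.mp hu)]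
    exact hA.add hB
  have hIic : IntegrableOn (fun u : ℝ => (if |u| ≤ r₀ then (c * |u|) ^ (-(1/2 : ℝ)) else 0)
      + Real.exp (-b * |u|)) (Iic 0) := by
    have h5 := ((integrable_indicator_iff measurableSet_Ici).2 hIci).comp_neg
    rw [← integrable_indicator_iff measurableSet_Iic]
    convert h5 using 1
    · rfl
    funext u
    simp only [Function.comp, indicator, mem_Ici, mem_Iic]
    by_cases h : u ≤ 0 <;> simp [h, neg_nonneg, abs_neg]
  rw [← integrableOn_univ, ← Set.Iic_union_Ioi (a := (0:ℝ))]
  exact hIic.union (hIci.mono_set Ioi_subset_Ici_self)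

theorem stmt_10 (C₁ : ℝ) (hC₁ : 0 < C₁) (γ : ℝ → EuclideanSpace ℝ (Fin 2))
    (hbil : ∀ s t : ℝ, C₁ * |s - t| ≤ ‖γ s - γ t‖ ∧ ‖γ s - γ t‖ ≤ |s - t|)
    (R κ : ℝ) (hR : 0 < R) (hκ : 0 < κ) :
    (⨆ x : EuclideanSpace ℝ (Fin 2),
      ∫⁻ s : ℝ, ENNReal.ofReal
        (if ‖x - γ s‖ ≤ R then ‖x - γ s‖ ^ (-(1 / 2 : ℝ))
         else Real.exp (-κ * ‖x - γ s‖))) < ⊤ := by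
  set c : ℝ := C₁ / 2 with hc_def
  have hc : 0 < c := by positivity
  set r₀ : ℝ := R / c with hr₀_def
  have hr₀ : 0 ≤ r₀ := by positivity
  set b : ℝ := κ * c with hb_def
  have hb : 0 < b := by positivity
  set φ : ℝ → ℝ := fun u => (if |u| ≤ r₀ then (c * |u|) ^ (-(1/2 : ℝ)) else 0)
    + Real.exp (-b * |u|) with hφ
  have hint : Integrable φ := stmt10_aux_int c r₀ b hc hb hr₀
  have hM : (∫⁻ u : ℝ, ENNReal.ofReal (φ u)) < ⊤ := hint.lintegral_lt_top
  refine lt_of_le_of_lt (iSup_le fun x => ?_) hM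
  have hlip : LipschitzWith 1 γ := LipschitzWith.of_dist_le_mul fun s t => by
    rw [dist_eq_norm, Real.dist_eq]
    simpa using (hbil s t).2
  have hd_cont : Continuous fun s : ℝ => ‖x - γ s‖ :=
    (continuous_const.sub hlip.continuous).norm
  have hcoer : ∀ s : ℝ, C₁ * |s| - ‖x - γ 0‖ ≤ ‖x - γ s‖ := by
    intro s
    have h1 := (hbil s 0).1
    have h2 : ‖γ s - γ 0‖ ≤ ‖x - γ 0‖ + ‖x - γ s‖ := by
      have he : γ s - γ 0 = (x - γ 0) - (x - γ s) := by abel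
      rw [he]
      exact norm_sub_le _ _
    simp only [sub_zero] at h1
    linarith
  have htends : Tendsto (fun s : ℝ => ‖x - γ s‖) (cocompact ℝ) atTop := by
    apply tendsto_atTop_mono hcoer
    apply tendsto_atTop_add_const_right
    have := tendsto_norm_cocompact_atTop (E := ℝ) |>.const_mul_atTop hC₁
    simpa [Real.norm_eq_abs] using this
  obtain ⟨t, ht⟩ := hd_cont.exists_forall_le htends
  have hkey : ∀ s : ℝ, c * |s - t| ≤ ‖x - γ s‖ := by
    intro s
    have h1 := (hbil s t).1
    have h2 : ‖γ s - γ t‖ ≤ ‖x - γ t‖ + ‖x - γ s‖ := by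
      have he : γ s - γ t = (x - γ t) - (x - γ s) := by abel
      rw [he]
      exact norm_sub_le _ _
    have h3 := ht s
    rw [hc_def]
    linarith
  have hne : ∀ᵐ s : ℝ, s ≠ t := by
    rw [ae_iff]
    simpa [not_not, setOf_eq_eq_singleton] using measure_singleton (μ := (volume : Measure ℝ)) t
  have hbound : ∀ᵐ s : ℝ, ENNReal.ofReal
        (if ‖x - γ s‖ ≤ R then ‖x - γ s‖ ^ (-(1 / 2 : ℝ))
         else Real.exp (-κ * ‖x - γ s‖)) ≤ ENNReal.ofReal (φ (s - t)) := by
    filter_upwards [hne] with s hst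
    have hpos : 0 < c * |s - t| := by
      have : 0 < |s - t| := abs_pos.2 (sub_ne_zero.2 hst)
      positivity
    have hkeys := hkey s
    simp only [hφ]
    by_cases hcase : ‖x - γ s‖ ≤ R
    · rw [if_pos hcase]
      apply ENNReal.ofReal_le_ofReal
      have hin : |s - t| ≤ r₀ := by
        rw [hr₀_def, le_div_iff₀ hc]
        nlinarith
      rw [if_pos hin]
      have hle : ‖x - γ s‖ ^ (-(1/2:ℝ)) ≤ (c * |s - t|) ^ (-(1/2:ℝ)) :=
        Real.rpow_le_rpow_of_nonpos hpos hkeys (by norm_num)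
      have hexp : 0 < Real.exp (-b * |s - t|) := Real.exp_pos _
      linarith
    · rw [if_neg hcase]
      apply ENNReal.ofReal_le_ofReal
      have h1 : Real.exp (-κ * ‖x - γ s‖) ≤ Real.exp (-b * |s - t|) := by
        apply Real.exp_le_exp.2
        rw [hb_def]
        nlinarith
      have h2 : (0:ℝ) ≤ if |s - t| ≤ r₀ then (c * |s - t|) ^ (-(1/2:ℝ)) else 0 := by
        split
        · positivity
        · exact le_refl 0
      linarith
  refine le_trans (lintegral_mono_ae hbound) (le_of_eq ?_)
  simpa [sub_eq_add_neg] using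
    lintegral_add_right_eq_self (fun u : ℝ => ENNReal.ofReal (φ u)) (-t)
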